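/- There exists an absolute constant C₀ > 1 with the following property. Let f ≥ 2 be real, N a natural number, w ∈ ℂ, and ζ₁, …, ζ_m ∈ ℂ a finite list such that for every integer n ≥ 0 the number of indices j with n ≤ |Re(w − ζ_j)| < n+1 is at most N. Then ∏_{j : |w−ζ_j| ≥ 1} (f / |w − ζ_j|) ≤ C₀^{N·f}. -/

import Mathlib

/-- There is an absolute constant `C₀ > 1` such that: for any real
`f ≥ 2`, any `N ∈ ℕ`, any `w ∈ ℂ` and any finite list `ζ₁, …, ζ_m ∈ ℂ` such that each
unit strip `{n ≤ |Re(w - ζ_j)| < n+1}` contains at most `N` of the `ζ_j`, one has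
`∏_{j : |w - ζ_j| ≥ 1} f / |w - ζ_j| ≤ C₀^{N f}`. -/
theorem statement14 :
    ∃ C₀ : ℝ, 1 < C₀ ∧
      ∀ (f : ℝ), 2 ≤ f →
      ∀ (N : ℕ) (w : ℂ) (m : ℕ) (ζ : Fin m → ℂ),
        (∀ n : ℕ,
          (Finset.univ.filter fun j : Fin m =>
            (n : ℝ) ≤ |(w - ζ j).re| ∧ |(w - ζ j).re| < n + 1).card ≤ N) →
        (∏ j ∈ Finset.univ.filter (fun j : Fin m => 1 ≤ ‖w - ζ j‖),
            f / ‖w - ζ j‖) ≤ C₀ ^ ((N : ℝ) * f) := by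
  refine ⟨Real.exp 2, ?_, ?_⟩
  · have := Real.add_one_le_exp (2 : ℝ); linarith
  intro f hf N w m ζ hstrip
  have hf0 : (0 : ℝ) < f := by linarith
  set nj : Fin m → ℕ := fun j => ⌊|(w - ζ j).re|⌋₊ with hnj
  set B : ℕ → ℝ := fun n => max 1 (f / max 1 (n : ℝ)) with hB
  have hB1 : ∀ n, (1 : ℝ) ≤ B n := fun n => le_max_left _ _
  set K : ℕ := ⌊f⌋₊ with hK
  -- Step A: bound each factor by B (nj j)
  have stepA : (∏ j ∈ Finset.univ.filter (fun j : Fin m => 1 ≤ ‖w - ζ j‖),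
      f / ‖w - ζ j‖) ≤
      ∏ j ∈ Finset.univ.filter (fun j : Fin m => 1 ≤ ‖w - ζ j‖), B (nj j) := by
    refine Finset.prod_le_prod (fun j _ => by positivity) ?_
    intro j hj
    rw [Finset.mem_filter] at hj
    have h1 : (1 : ℝ) ≤ ‖w - ζ j‖ := hj.2
    have h2 : (nj j : ℝ) ≤ ‖w - ζ j‖ :=
      le_trans (Nat.floor_le (abs_nonneg _)) ((Complex.abs_re_le_norm _).trans_eq rfl)
    have hmax : max 1 (nj j : ℝ) ≤ ‖w - ζ j‖ := max_le h1 h2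
    have : f / ‖w - ζ j‖ ≤ f / max 1 (nj j : ℝ) := by
      apply div_le_div_of_nonneg_left hf0.le _ hmax
      exact lt_of_lt_of_le one_pos (le_max_left _ _)
    exact this.trans (le_max_right _ _)
  -- Step B: extend to full product
  have stepB : (∏ j ∈ Finset.univ.filter (fun j : Fin m => 1 ≤ ‖w - ζ j‖),
      B (nj j)) ≤ ∏ j : Fin m, B (nj j) := by
    rw [← Finset.prod_filter_mul_prod_filter_not Finset.univ
      (fun j : Fin m => 1 ≤ ‖w - ζ j‖) (fun j => B (nj j))]
    have hone : (1 : ℝ) ≤ ∏ j ∈ Finset.univ.filter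
        (fun j : Fin m => ¬ (1 ≤ ‖w - ζ j‖)), B (nj j) := by
      calc (1 : ℝ) = ∏ _j ∈ Finset.univ.filter
            (fun j : Fin m => ¬ (1 ≤ ‖w - ζ j‖)), (1 : ℝ) := by simp
        _ ≤ _ := Finset.prod_le_prod (fun _ _ => zero_le_one) (fun j _ => hB1 _)
    exact le_mul_of_one_le_right
      (Finset.prod_nonneg fun j _ => le_trans zero_le_one (hB1 _)) hone
  -- Step C: drop indices in far strips (their B is 1)
  have stepC : (∏ j : Fin m, B (nj j)) =
      ∏ j ∈ Finset.univ.filter (fun j : Fin m => nj j ∈ Finset.range (K + 1)), B (nj j) := by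
    symm
    refine Finset.prod_filter_of_ne ?_
    intro j _ hne
    by_contra hmem
    apply hne
    rw [Finset.mem_range, not_lt] at hmem
    have hKf : f < (K : ℝ) + 1 := Nat.lt_floor_add_one f
    have hn1 : (1 : ℝ) ≤ (nj j : ℝ) := by
      have : (1 : ℕ) ≤ nj j := le_trans (Nat.succ_le_succ (Nat.zero_le K)) hmem
      exact_mod_cast this
    have hfn : f ≤ (nj j : ℝ) := by
      have : (K : ℝ) + 1 ≤ (nj j : ℝ) := by exact_mod_cast hmem
      linarith
    have : f / max 1 (nj j : ℝ) ≤ 1 := by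
      rw [max_eq_right hn1]
      exact div_le_one_of_le₀ hfn (by linarith)
    simp [hB, max_eq_left this]
  -- Step D/E: fiberwise bound
  have stepD : (∏ j ∈ Finset.univ.filter (fun j : Fin m => nj j ∈ Finset.range (K + 1)),
      B (nj j)) ≤ ∏ n ∈ Finset.range (K + 1), B n ^ N := by
    rw [← Finset.prod_fiberwise_of_maps_to (g := nj)
      (fun j hj => (Finset.mem_filter.mp hj).2) (fun j => B (nj j))]
    refine Finset.prod_le_prod (fun n _ => Finset.prod_nonneg fun j _ => by positivity) ?_
    intro n _
    have hcongr : (∏ j ∈ (Finset.univ.filter (fun j : Fin m => nj j ∈ Finset.range (K + 1))).filter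
        (fun j => nj j = n), B (nj j)) = B n ^ ((Finset.univ.filter
          (fun j : Fin m => nj j ∈ Finset.range (K + 1))).filter (fun j => nj j = n)).card := by
      rw [← Finset.prod_const]
      exact Finset.prod_congr rfl fun j hj => by
        rw [(Finset.mem_filter.mp hj).2]
    rw [hcongr]
    have hsub : ((Finset.univ.filter (fun j : Fin m => nj j ∈ Finset.range (K + 1))).filter
        (fun j => nj j = n)) ⊆ Finset.univ.filter (fun j : Fin m =>
          (n : ℝ) ≤ |(w - ζ j).re| ∧ |(w - ζ j).re| < n + 1) := by
      intro j hj
      have hjn : nj j = n := (Finset.mem_filter.mp hj).2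
      rw [Finset.mem_filter]
      refine ⟨Finset.mem_univ _, ?_, ?_⟩
      · rw [← hjn]; exact Nat.floor_le (abs_nonneg _)
      · rw [← hjn]
        simp only [hnj]
        exact Nat.lt_floor_add_one _
    have hcard : ((Finset.univ.filter (fun j : Fin m => nj j ∈ Finset.range (K + 1))).filter
        (fun j => nj j = n)).card ≤ N :=
      le_trans (Finset.card_le_card hsub) (hstrip n)
    exact pow_le_pow_right₀ (hB1 n) hcard
  -- Step F: compute the product of B over the range
  have stepF : (∏ n ∈ Finset.range (K + 1), B n) ≤ Real.exp (2 * f) := by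
    have hBval : ∀ n ∈ Finset.range (K + 1), B n = f / max 1 (n : ℝ) := by
      intro n hn
      rw [Finset.mem_range, Nat.lt_succ_iff] at hn
      have hnf : (n : ℝ) ≤ f := le_trans (by exact_mod_cast hn) (Nat.floor_le hf0.le)
      have : (1 : ℝ) ≤ f / max 1 (n : ℝ) := by
        rw [le_div_iff₀ (lt_of_lt_of_le one_pos (le_max_left _ _)), one_mul]
        exact max_le (by linarith) hnf
      exact max_eq_right this
    rw [Finset.prod_congr rfl hBval, Finset.prod_range_succ']
    have h0 : f / max 1 ((0 : ℕ) : ℝ) = f := by norm_num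
    rw [h0]
    have hinner : (∏ i ∈ Finset.range K, f / max 1 ((i + 1 : ℕ) : ℝ)) =
        f ^ K / ((Nat.factorial K : ℕ) : ℝ) := by
      rw [Finset.prod_div_distrib, Finset.prod_const]
      congr 1
      · rw [Finset.card_range]
      · have hmx : ∀ i ∈ Finset.range K, max 1 (((i + 1 : ℕ) : ℝ)) = ((i + 1 : ℕ) : ℝ) := by
          intro i _
          rw [max_eq_right]
          exact_mod_cast Nat.one_le_iff_ne_zero.mpr (Nat.succ_ne_zero i)
        rw [Finset.prod_congr rfl hmx, ← Nat.cast_prod,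
          Finset.prod_range_add_one_eq_factorial]
    rw [hinner]
    have h1 : f ^ K / ((Nat.factorial K : ℕ) : ℝ) ≤ Real.exp f := Real.pow_div_factorial_le_exp f hf0.le K
    have h2 : f ≤ Real.exp f := by have := Real.add_one_le_exp f; linarith
    calc f ^ K / ((Nat.factorial K : ℕ) : ℝ) * f ≤ Real.exp f * Real.exp f := by
          apply mul_le_mul h1 h2 hf0.le (Real.exp_pos f).le
      _ = Real.exp (2 * f) := by rw [← Real.exp_add]; ring_nf
  -- put everything together
  have final : (∏ n ∈ Finset.range (K + 1), B n ^ N) ≤ Real.exp 2 ^ ((N : ℝ) * f) := by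
    rw [Finset.prod_pow]
    have hnn : (0 : ℝ) ≤ ∏ n ∈ Finset.range (K + 1), B n :=
      Finset.prod_nonneg fun n _ => le_trans zero_le_one (hB1 n)
    calc (∏ n ∈ Finset.range (K + 1), B n) ^ N ≤ Real.exp (2 * f) ^ N :=
          pow_le_pow_left₀ hnn stepF N
      _ = Real.exp ((N : ℝ) * (2 * f)) := by rw [← Real.exp_nat_mul]
      _ = Real.exp 2 ^ ((N : ℝ) * f) := by
          rw [Real.rpow_def_of_pos (Real.exp_pos 2), Real.log_exp]
          ring_nf
  calc _ ≤ _ := stepA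
    _ ≤ _ := stepB
    _ = _ := stepC
    _ ≤ _ := stepD
    _ ≤ Real.exp 2 ^ ((N : ℝ) * f) := final
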